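/- (Kasteleyn's theorem in positivity form, Theorem 2.4.) Let n ≥ 1, let G be a finite simple graph on the vertex set {1,…,2n}, equipped with a direction of each edge (for each edge {i,j}, exactly one of i ≻ j or j ≻ i holds) and with edge weights d_e in a commutative ℚ-algebra R. Define the antisymmetric 2n×2n matrix a by a_{i,j} := +d_{i,j} if {i,j} is an edge of G and i ≻ j; a_{i,j} := −d_{i,j} if {i,j} is an edge of G and i ≺ j; and a_{i,j} := 0 if {i,j} is not an edge of G. Call a perfect matching σ of G, written as pairs (v_1,v_2),…,(v_{2n−1},v_{2n}) with v_{2k−1} ≻ v_{2k}, positive if the permutation k ↦ v_k of {1,…,2n} has signature +1 (this is independent of the ordering of the pairs). If every perfect matching of G is positive (or G has no perfect matching), then pf(a) = Σ_{σ} ∏_{e ∈ σ} d_e, the sum running over all perfect matchings σ of G; i.e., the Pfaffian of a equals the pure dimer partition function of G. -/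

import Mathlib

open Matrix

/-- The Pfaffian of an `N × N` matrix (intended for antisymmetric matrices of even size `N`),
defined by `pf A = (1/(2^(N/2) (N/2)!)) ∑_{π ∈ S_N} sgn(π) ∏_k A_{π(2k-1), π(2k)}`.
For `N = 0` this gives `1` (the empty-matrix convention). -/
noncomputable def pf {R : Type*} [CommRing R] [Algebra ℚ R] {N : ℕ}
    (A : Matrix (Fin N) (Fin N) R) : R :=
  algebraMap ℚ R (1 / (2 ^ (N / 2) * Nat.factorial (N / 2))) *
    ∑ π : Equiv.Perm (Fin N), (Equiv.Perm.sign π : ℤ) •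
      ∏ k : Fin (N / 2),
        A (π ⟨2 * k.val, by have := k.isLt; omega⟩)
          (π ⟨2 * k.val + 1, by have := k.isLt; omega⟩)


/-- The index `2k` (0-based) in `Fin (2*n)`, i.e. the position `2k-1` in 1-based notation. -/
def lo {n : ℕ} (k : Fin n) : Fin (2 * n) := ⟨2 * k.val, by have := k.isLt; omega⟩

/-- The index `2k+1` (0-based) in `Fin (2*n)`, i.e. the position `2k` in 1-based notation. -/
def hi {n : ℕ} (k : Fin n) : Fin (2 * n) := ⟨2 * k.val + 1, by have := k.isLt; omega⟩

@[simp] theorem Equiv.Perm.apply_inv_self {α : Type*} (f : Equiv.Perm α) (x : α) :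
    f (f⁻¹ x) = x := f.apply_symm_apply x

@[simp] theorem Equiv.Perm.inv_apply_self {α : Type*} (f : Equiv.Perm α) (x : α) :
    f⁻¹ (f x) = x := f.symm_apply_apply x

namespace Kast

variable {n : ℕ}

lemma lo_val (k : Fin n) : (lo k).val = 2 * k.val := rfl
lemma hi_val (k : Fin n) : (hi k).val = 2 * k.val + 1 := rfl

lemma lo_inj {k k' : Fin n} (h : lo k = lo k') : k = k' := by
  have := congrArg Fin.val h; rw [lo_val, lo_val] at this; exact Fin.ext (by omega)

lemma hi_inj {k k' : Fin n} (h : hi k = hi k') : k = k' := by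
  have := congrArg Fin.val h; rw [hi_val, hi_val] at this; exact Fin.ext (by omega)

lemma lo_ne_hi (k k' : Fin n) : lo k ≠ hi k' := by
  intro h; have := congrArg Fin.val h; rw [lo_val, hi_val] at this; omega

def sfun (x : Fin (2 * n)) : Fin (2 * n) :=
  if _h : x.val % 2 = 0 then ⟨x.val + 1, by have := x.isLt; omega⟩
  else ⟨x.val - 1, by have := x.isLt; omega⟩

lemma sfun_val (x : Fin (2 * n)) :
    (sfun x).val = if x.val % 2 = 0 then x.val + 1 else x.val - 1 := by
  unfold sfun; split <;> simp_all

lemma sfun_invol : Function.Involutive (sfun (n := n)) := by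
  intro x; apply Fin.ext; simp only [sfun_val]; have := x.isLt; split_ifs <;> omega

def sp : Equiv.Perm (Fin (2 * n)) := Function.Involutive.toPerm sfun sfun_invol

lemma sp_apply (x : Fin (2 * n)) : sp x = sfun x := rfl

lemma sp_lo (k : Fin n) : sp (lo k) = hi k := by
  apply Fin.ext
  rw [sp_apply, sfun_val, lo_val, hi_val, if_pos (by omega)]

lemma sp_hi (k : Fin n) : sp (hi k) = lo k := by
  apply Fin.ext
  rw [sp_apply, sfun_val, hi_val, lo_val, if_neg (by omega)]
  omega

lemma sp_ne (x : Fin (2 * n)) : sp x ≠ x := by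
  intro h
  have hv : (sfun x).val = x.val := congrArg Fin.val h
  rw [sfun_val] at hv
  split_ifs at hv <;> omega

lemma lo_or_hi (x : Fin (2 * n)) : (∃ k : Fin n, x = lo k) ∨ (∃ k : Fin n, x = hi k) := by
  have hx := x.isLt
  by_cases h : x.val % 2 = 0
  · exact Or.inl ⟨⟨x.val / 2, by omega⟩, Fin.ext (by simp [lo_val]; omega)⟩
  · exact Or.inr ⟨⟨x.val / 2, by omega⟩, Fin.ext (by simp [hi_val]; omega)⟩


/-- building block of the centralizer of `sp` -/
def bq (ε : Fin n → Bool) (τ : Equiv.Perm (Fin n)) (x : Fin (2 * n)) : Fin (2 * n) :=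
  ⟨2 * (τ ⟨x.val / 2, by have := x.isLt; omega⟩).val
      + (x.val + if ε ⟨x.val / 2, by have := x.isLt; omega⟩ then 1 else 0) % 2,
    by have := (τ ⟨x.val / 2, by have := x.isLt; omega⟩).isLt; omega⟩

lemma bq_val (ε : Fin n → Bool) (τ : Equiv.Perm (Fin n)) (x : Fin (2 * n)) :
    (bq ε τ x).val = 2 * (τ ⟨x.val / 2, by have := x.isLt; omega⟩).val
      + (x.val + if ε ⟨x.val / 2, by have := x.isLt; omega⟩ then 1 else 0) % 2 := rfl

lemma idx_lo (k : Fin n) : (⟨(lo k).val / 2, by have := (lo k).isLt; omega⟩ : Fin n) = k := by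
  apply Fin.ext; show (lo k).val / 2 = k.val; rw [lo_val]; omega

lemma idx_hi (k : Fin n) : (⟨(hi k).val / 2, by have := (hi k).isLt; omega⟩ : Fin n) = k := by
  apply Fin.ext; show (hi k).val / 2 = k.val; rw [hi_val]; omega

lemma bq_lo (ε : Fin n → Bool) (τ : Equiv.Perm (Fin n)) (k : Fin n) :
    bq ε τ (lo k) = if ε k then hi (τ k) else lo (τ k) := by
  apply Fin.ext
  rw [bq_val, idx_lo]
  cases hε : ε k <;> simp [lo_val, hi_val] <;> omega

lemma bq_hi (ε : Fin n → Bool) (τ : Equiv.Perm (Fin n)) (k : Fin n) :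
    bq ε τ (hi k) = if ε k then lo (τ k) else hi (τ k) := by
  apply Fin.ext
  rw [bq_val, idx_hi]
  cases hε : ε k <;> simp [hi_val, lo_val] <;> omega

lemma bq_left_inv (ε : Fin n → Bool) (τ : Equiv.Perm (Fin n)) (x : Fin (2 * n)) :
    bq (fun k => ε (τ⁻¹ k)) τ⁻¹ (bq ε τ x) = x := by
  rcases lo_or_hi x with ⟨k, rfl⟩ | ⟨k, rfl⟩
  · rw [bq_lo]
    cases hε : ε k <;> simp [bq_lo, bq_hi, hε, Equiv.Perm.inv_apply_self]
  · rw [bq_hi]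
    cases hε : ε k <;> simp [bq_lo, bq_hi, hε, Equiv.Perm.inv_apply_self]

lemma bq_inj (ε : Fin n → Bool) (τ : Equiv.Perm (Fin n)) : Function.Injective (bq ε τ) :=
  Function.LeftInverse.injective (g := bq (fun k => ε (τ⁻¹ k)) τ⁻¹) (bq_left_inv ε τ)

/-- the element of the centralizer of `sp` determined by pair-flips `ε` and pair-permutation `τ`. -/
noncomputable def Build (ε : Fin n → Bool) (τ : Equiv.Perm (Fin n)) : Equiv.Perm (Fin (2 * n)) :=
  Equiv.ofBijective (bq ε τ) (Finite.injective_iff_bijective.mp (bq_inj ε τ))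

lemma Build_apply (ε : Fin n → Bool) (τ : Equiv.Perm (Fin n)) (x : Fin (2 * n)) :
    Build ε τ x = bq ε τ x := rfl

lemma Build_comm (ε : Fin n → Bool) (τ : Equiv.Perm (Fin n)) (x : Fin (2 * n)) :
    Build ε τ (sp x) = sp (Build ε τ x) := by
  rcases lo_or_hi x with ⟨k, rfl⟩ | ⟨k, rfl⟩
  · rw [sp_lo, Build_apply, Build_apply, bq_hi, bq_lo]
    cases hε : ε k <;> simp [hε, sp_lo, sp_hi]
  · rw [sp_hi, Build_apply, Build_apply, bq_lo, bq_hi]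
    cases hε : ε k <;> simp [hε, sp_lo, sp_hi]


def epsOf (h : Equiv.Perm (Fin (2 * n))) : Fin n → Bool :=
  fun k => decide ((h (lo k)).val % 2 = 1)

def tfun (h : Equiv.Perm (Fin (2 * n))) : Fin n → Fin n :=
  fun k => ⟨(h (lo k)).val / 2, by have := (h (lo k)).isLt; omega⟩

open Classical in
noncomputable def tperm (h : Equiv.Perm (Fin (2 * n))) : Equiv.Perm (Fin n) :=
  if hb : Function.Bijective (tfun h) then Equiv.ofBijective _ hb else 1

lemma same_pair (x y : Fin (2 * n)) (hxy : x.val / 2 = y.val / 2) : y = x ∨ y = sp x := by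
  by_cases hv : y.val = x.val
  · exact Or.inl (Fin.ext hv)
  · refine Or.inr (Fin.ext ?_)
    rw [sp_apply, sfun_val]
    split_ifs <;> omega

lemma tfun_inj (h : Equiv.Perm (Fin (2 * n))) (hc : ∀ x, h (sp x) = sp (h x)) :
    Function.Injective (tfun h) := by
  intro k k' he
  have hv : (h (lo k)).val / 2 = (h (lo k')).val / 2 := congrArg Fin.val he
  rcases same_pair (h (lo k)) (h (lo k')) hv with h1 | h1
  · exact (lo_inj (h.injective h1)).symm
  · rw [← hc, sp_lo] at h1
    exact absurd (h.injective h1) (lo_ne_hi k' k)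

lemma tperm_eq (h : Equiv.Perm (Fin (2 * n))) (hc : ∀ x, h (sp x) = sp (h x)) (k : Fin n) :
    tperm h k = tfun h k := by
  have hb : Function.Bijective (tfun h) := Finite.injective_iff_bijective.mp (tfun_inj h hc)
  simp only [tperm, dif_pos hb]
  rfl

lemma build_eps_tperm (h : Equiv.Perm (Fin (2 * n))) (hc : ∀ x, h (sp x) = sp (h x)) :
    Build (epsOf h) (tperm h) = h := by
  apply Equiv.ext
  intro x
  rcases lo_or_hi x with ⟨k, rfl⟩ | ⟨k, rfl⟩
  · rw [Build_apply, bq_lo]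
    by_cases hpar : (h (lo k)).val % 2 = 1
    · have heps : epsOf h k = true := by simp [epsOf, hpar]
      rw [heps, if_pos rfl, tperm_eq h hc]
      apply Fin.ext
      rw [hi_val]
      show 2 * ((h (lo k)).val / 2) + 1 = (h (lo k)).val
      omega
    · have heps : epsOf h k = false := by simp [epsOf, hpar]
      rw [heps, if_neg (by simp), tperm_eq h hc]
      apply Fin.ext
      rw [lo_val]
      show 2 * ((h (lo k)).val / 2) = (h (lo k)).val
      omega
  · have hx : h (hi k) = sp (h (lo k)) := by rw [← sp_lo, hc]
    rw [Build_apply, bq_hi, hx]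
    by_cases hpar : (h (lo k)).val % 2 = 1
    · have heps : epsOf h k = true := by simp [epsOf, hpar]
      rw [heps, if_pos rfl, tperm_eq h hc]
      apply Fin.ext
      rw [lo_val, sp_apply, sfun_val, if_neg (by omega)]
      show 2 * ((h (lo k)).val / 2) = (h (lo k)).val - 1
      omega
    · have heps : epsOf h k = false := by simp [epsOf, hpar]
      rw [heps, if_neg (by simp), tperm_eq h hc]
      apply Fin.ext
      rw [hi_val, sp_apply, sfun_val, if_pos (by omega)]
      show 2 * ((h (lo k)).val / 2) + 1 = (h (lo k)).val + 1
      omega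

lemma eps_build (ε : Fin n → Bool) (τ : Equiv.Perm (Fin n)) : epsOf (Build ε τ) = ε := by
  funext k
  cases hε : ε k <;>
    simp [epsOf, Build_apply, bq_lo, hε, hi_val, lo_val] <;> omega

lemma tperm_build (ε : Fin n → Bool) (τ : Equiv.Perm (Fin n)) : tperm (Build ε τ) = τ := by
  have hfe : tfun (Build ε τ) = ⇑τ := by
    funext k
    apply Fin.ext
    show (Build ε τ (lo k)).val / 2 = (τ k).val
    rw [Build_apply, bq_lo]
    cases hε : ε k <;> simp [hi_val, lo_val] <;> omega
  simp only [tperm, hfe, dif_pos τ.bijective]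
  exact Equiv.ext fun x => rfl

lemma card_centralizer :
    (Finset.univ.filter fun h : Equiv.Perm (Fin (2 * n)) => ∀ x, h (sp x) = sp (h x)).card
      = 2 ^ n * n.factorial := by
  classical
  have hcard := Finset.card_bij'
    (s := Finset.univ.filter fun h : Equiv.Perm (Fin (2 * n)) => ∀ x, h (sp x) = sp (h x))
    (t := (Finset.univ : Finset ((Fin n → Bool) × Equiv.Perm (Fin n))))
    (i := fun h _ => (epsOf h, tperm h))
    (j := fun p _ => Build p.1 p.2)
    (fun h hh => Finset.mem_univ _)
    (fun p hp => Finset.mem_filter.mpr ⟨Finset.mem_univ _, Build_comm p.1 p.2⟩)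
    (fun h hh => build_eps_tperm h (Finset.mem_filter.mp hh).2)
    (fun p hp => Prod.ext (eps_build p.1 p.2) (tperm_build p.1 p.2))
  rw [hcard, Finset.card_univ, Fintype.card_prod, Fintype.card_fun, Fintype.card_perm,
    Fintype.card_bool, Fintype.card_fin]


lemma exists_pi0 (f : Equiv.Perm (Fin (2 * n))) (h1 : ∀ i, f i ≠ i) (h2 : ∀ i, f (f i) = i) :
    ∃ π : Equiv.Perm (Fin (2 * n)), ∀ x, π (sp x) = f (π x) := by
  classical
  set A : Finset (Fin (2 * n)) := Finset.univ.filter (fun i => i < f i) with hA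
  set B : Finset (Fin (2 * n)) := Finset.univ.filter (fun i => f i < i) with hB
  have hcAB : A.card = B.card := by
    apply Finset.card_bij (fun i _ => f i)
    · intro i hi
      have := (Finset.mem_filter.mp hi).2
      exact Finset.mem_filter.mpr ⟨Finset.mem_univ _, by rw [h2]; exact this⟩
    · intro i _ j _ hij; exact f.injective hij
    · intro b hb
      have := (Finset.mem_filter.mp hb).2
      exact ⟨f b, Finset.mem_filter.mpr ⟨Finset.mem_univ _, by rw [h2]; exact this⟩, h2 b⟩
  have hdisj : Disjoint A B := by
    rw [Finset.disjoint_left]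
    intro i hiA hiB
    exact absurd (Finset.mem_filter.mp hiB).2 (lt_asymm (Finset.mem_filter.mp hiA).2)
  have hunion : A ∪ B = Finset.univ := by
    apply Finset.eq_univ_of_forall
    intro i
    rcases (h1 i).lt_or_gt with h | h
    · exact Finset.mem_union.mpr (Or.inr (Finset.mem_filter.mpr ⟨Finset.mem_univ _, h⟩))
    · exact Finset.mem_union.mpr (Or.inl (Finset.mem_filter.mpr ⟨Finset.mem_univ _, h⟩))
  have htot : A.card + B.card = 2 * n := by
    rw [← Finset.card_union_of_disjoint hdisj, hunion, Finset.card_univ, Fintype.card_fin]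
  have hcA : A.card = n := by omega
  let e := (Finset.equivFinOfCardEq hcA).symm
  have heA : ∀ k : Fin n, ((e k : Fin (2 * n))) < f (e k) := fun k =>
    (Finset.mem_filter.mp (e k).2).2
  let p : Fin (2 * n) → Fin (2 * n) := fun x =>
    if x.val % 2 = 0 then (e ⟨x.val / 2, by have := x.isLt; omega⟩ : Fin (2 * n))
    else f (e ⟨x.val / 2, by have := x.isLt; omega⟩)
  have hplo : ∀ k : Fin n, p (lo k) = e k := by
    intro k
    simp only [p]
    rw [if_pos (by rw [lo_val]; omega), idx_lo]
  have hphi : ∀ k : Fin n, p (hi k) = f (e k) := by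
    intro k
    simp only [p]
    rw [if_neg (by rw [hi_val]; omega), idx_hi]
  have hABne : ∀ k k' : Fin n, (e k : Fin (2 * n)) ≠ f (e k') := by
    intro k k' hEq
    have h3 := heA k
    have h4 := heA k'
    rw [hEq, h2] at h3
    exact absurd h4 (lt_asymm h3)
  have hpinj : Function.Injective p := by
    intro x y hxy
    rcases lo_or_hi x with ⟨k, rfl⟩ | ⟨k, rfl⟩ <;> rcases lo_or_hi y with ⟨k', rfl⟩ | ⟨k', rfl⟩
    · rw [hplo, hplo] at hxy
      exact congrArg lo (e.injective (Subtype.coe_injective hxy))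
    · rw [hplo, hphi] at hxy
      exact absurd hxy (hABne k k')
    · rw [hphi, hplo] at hxy
      exact absurd hxy.symm (hABne k' k)
    · rw [hphi, hphi] at hxy
      exact congrArg hi (e.injective (Subtype.coe_injective (f.injective hxy)))
  refine ⟨Equiv.ofBijective p (Finite.injective_iff_bijective.mp hpinj), ?_⟩
  intro x
  rcases lo_or_hi x with ⟨k, rfl⟩ | ⟨k, rfl⟩
  · rw [sp_lo]
    show p (hi k) = f (p (lo k))
    rw [hphi, hplo]
  · rw [sp_hi]
    show p (lo k) = f (p (hi k))
    rw [hplo, hphi, h2]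


lemma pf_2n {R : Type*} [CommRing R] [Algebra ℚ R] (A : Matrix (Fin (2 * n)) (Fin (2 * n)) R) :
    pf A = algebraMap ℚ R (1 / (2 ^ n * Nat.factorial n)) *
      ∑ π : Equiv.Perm (Fin (2 * n)), (Equiv.Perm.sign π : ℤ) •
        ∏ k : Fin n, A (π (lo k)) (π (hi k)) := by
  have hhalf : 2 * n / 2 = n := by omega
  rw [pf]
  congr 1
  · rw [hhalf]
  · apply Finset.sum_congr rfl
    intro π _
    congr 1
    exact Fintype.prod_equiv (finCongr hhalf) _ _ (fun k => rfl)

end Kast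

open Kast in
/-- **Kasteleyn's theorem in positivity form.**  Let `G` be a finite simple
graph on `{1,…,2n}`, with each edge `{i,j}` directed (exactly one of `i ≻ j`, `j ≻ i`, encoded
by the Boolean `dir`) and carrying a weight `d_{i,j} = d_{j,i}` in a commutative `ℚ`-algebra.
Let `a` be the signed adjacency matrix: `a_{i,j} = ±d_{i,j}` according to the direction for
edges, `0` otherwise.  A perfect matching, written as pairs `(v₁,v₂),…,(v_{2n-1},v_{2n})`
with `v_{2k-1} ≻ v_{2k}` (i.e. an enumerating permutation `π` with
`G.Adj (π(2k-1)) (π(2k))` and `π(2k-1) ≻ π(2k)`), is positive if the permutation has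
signature `+1`.  If every perfect matching of `G` is positive (in every such enumeration;
vacuously if there is none), then `pf(a)` equals the pure dimer partition function of `G`:
the sum over perfect matchings (encoded as fixed-point-free graph involutions `f`) of the
product of the weights of their edges. -/
theorem kasteleyn_positivity_form {R : Type*} [CommRing R] [Algebra ℚ R]
    (n : ℕ) (hn : 0 < n)
    (G : SimpleGraph (Fin (2 * n))) [DecidableRel G.Adj]
    (dir : Fin (2 * n) → Fin (2 * n) → Bool)
    (hdir : ∀ i j, G.Adj i j → dir i j = !dir j i)
    (d : Fin (2 * n) → Fin (2 * n) → R)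
    (hd : ∀ i j, d i j = d j i)
    (a : Matrix (Fin (2 * n)) (Fin (2 * n)) R)
    (ha : ∀ i j, a i j =
      if G.Adj i j then (if dir i j then d i j else -(d i j)) else 0)
    (hpos : ∀ π : Equiv.Perm (Fin (2 * n)),
      (∀ k : Fin n, G.Adj (π (lo k)) (π (hi k)) ∧ dir (π (lo k)) (π (hi k)) = true) →
      Equiv.Perm.sign π = 1) :
    pf a = ∑ f ∈ Finset.univ.filter
        (fun f : Equiv.Perm (Fin (2 * n)) => ∀ i, f i ≠ i ∧ f (f i) = i ∧ G.Adj i (f i)),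
      ∏ i ∈ Finset.univ.filter (fun i => i < f i), d i (f i) := by
  classical
  -- antisymmetry of `a`
  have hanti : ∀ i j, a j i = - a i j := by
    intro i j
    rw [ha, ha]
    by_cases hA : G.Adj i j
    · rw [if_pos hA, if_pos hA.symm]
      have hdd := hdir i j hA
      cases hji : dir j i
      · rw [hji] at hdd
        simp only [Bool.not_false] at hdd
        rw [hdd]
        simp [hd j i]
      · rw [hji] at hdd
        simp only [Bool.not_true] at hdd
        rw [hdd]
        simp [hd j i]
    · rw [if_neg hA, if_neg (fun h => hA h.symm)]
      simp
  -- the key sign lemma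
  have key : ∀ (S : Finset (Fin n)) (π : Equiv.Perm (Fin (2 * n))),
      (∀ k, G.Adj (π (lo k)) (π (hi k))) →
      (∀ k ∉ S, dir (π (lo k)) (π (hi k)) = true) →
      ((Equiv.Perm.sign π : ℤ) • ∏ k : Fin n, a (π (lo k)) (π (hi k)))
        = ∏ k : Fin n, d (π (lo k)) (π (hi k)) := by
    intro S
    induction S using Finset.induction_on with
    | empty =>
      intro π hadj hout
      have h1 := hpos π (fun k => ⟨hadj k, hout k (Finset.notMem_empty k)⟩)
      rw [h1]
      simp only [Units.val_one, one_smul]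
      exact Finset.prod_congr rfl fun k _ => by
        rw [ha, if_pos (hadj k), if_pos (hout k (Finset.notMem_empty k))]
    | @insert j S hjS ih =>
      intro π hadj hout
      by_cases hdj : dir (π (lo j)) (π (hi j)) = true
      · refine ih π hadj ?_
        intro k hk
        by_cases hkj : k = j
        · rw [hkj]; exact hdj
        · exact hout k (by simp [hkj, hk])
      · set σ : Equiv.Perm (Fin (2 * n)) := π * Equiv.swap (lo j) (hi j) with hσ
        have hσlo : ∀ k, k ≠ j → σ (lo k) = π (lo k) := by
          intro k hk
          rw [hσ]
          simp only [Equiv.Perm.mul_apply]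
          rw [Equiv.swap_apply_of_ne_of_ne (fun h => hk (lo_inj h)) (lo_ne_hi k j)]
        have hσhi : ∀ k, k ≠ j → σ (hi k) = π (hi k) := by
          intro k hk
          rw [hσ]
          simp only [Equiv.Perm.mul_apply]
          rw [Equiv.swap_apply_of_ne_of_ne (fun h => (lo_ne_hi j k) h.symm)
            (fun h => hk (hi_inj h))]
        have hσloj : σ (lo j) = π (hi j) := by
          rw [hσ]; simp only [Equiv.Perm.mul_apply, Equiv.swap_apply_left]
        have hσhij : σ (hi j) = π (lo j) := by
          rw [hσ]; simp only [Equiv.Perm.mul_apply, Equiv.swap_apply_right]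
        have hadjσ : ∀ k, G.Adj (σ (lo k)) (σ (hi k)) := by
          intro k
          by_cases hkj : k = j
          · rw [hkj, hσloj, hσhij]; exact (hadj j).symm
          · rw [hσlo k hkj, hσhi k hkj]; exact hadj k
        have houtσ : ∀ k ∉ S, dir (σ (lo k)) (σ (hi k)) = true := by
          intro k hk
          by_cases hkj : k = j
          · rw [hkj, hσloj, hσhij]
            have hdd := hdir _ _ (hadj j)
            cases hb : dir (π (hi j)) (π (lo j))
            · rw [hb] at hdd
              simp only [Bool.not_false] at hdd
              exact absurd hdd hdj
            · rfl
          · rw [hσlo k hkj, hσhi k hkj]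
            exact hout k (by simp [hkj, hk])
        have hIH := ih σ hadjσ houtσ
        have hsgn : (Equiv.Perm.sign σ : ℤ) = -(Equiv.Perm.sign π : ℤ) := by
          rw [hσ, Equiv.Perm.sign_mul, Equiv.Perm.sign_swap (lo_ne_hi j j)]
          simp
        have hFa : (∏ k : Fin n, a (σ (lo k)) (σ (hi k)))
            = -(∏ k : Fin n, a (π (lo k)) (π (hi k))) := by
          calc (∏ k : Fin n, a (σ (lo k)) (σ (hi k)))
              = a (σ (lo j)) (σ (hi j)) * ∏ k ∈ Finset.univ.erase j, a (σ (lo k)) (σ (hi k)) :=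
                (Finset.mul_prod_erase _ _ (Finset.mem_univ j)).symm
            _ = -(a (π (lo j)) (π (hi j))) * ∏ k ∈ Finset.univ.erase j, a (π (lo k)) (π (hi k)) := by
                rw [hσloj, hσhij, hanti (π (lo j)) (π (hi j))]
                congr 1
                exact Finset.prod_congr rfl fun k hk => by
                  rw [hσlo k (Finset.ne_of_mem_erase hk), hσhi k (Finset.ne_of_mem_erase hk)]
            _ = -(a (π (lo j)) (π (hi j)) * ∏ k ∈ Finset.univ.erase j, a (π (lo k)) (π (hi k))) := by
                ring
            _ = -(∏ k : Fin n, a (π (lo k)) (π (hi k))) := by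
                rw [Finset.mul_prod_erase Finset.univ
                  (fun k => a (π (lo k)) (π (hi k))) (Finset.mem_univ j)]
        have hFd : (∏ k : Fin n, d (σ (lo k)) (σ (hi k)))
            = ∏ k : Fin n, d (π (lo k)) (π (hi k)) := by
          calc (∏ k : Fin n, d (σ (lo k)) (σ (hi k)))
              = d (σ (lo j)) (σ (hi j)) * ∏ k ∈ Finset.univ.erase j, d (σ (lo k)) (σ (hi k)) :=
                (Finset.mul_prod_erase _ _ (Finset.mem_univ j)).symm
            _ = d (π (lo j)) (π (hi j)) * ∏ k ∈ Finset.univ.erase j, d (π (lo k)) (π (hi k)) := by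
                rw [hσloj, hσhij, hd (π (hi j)) (π (lo j))]
                congr 1
                exact Finset.prod_congr rfl fun k hk => by
                  rw [hσlo k (Finset.ne_of_mem_erase hk), hσhi k (Finset.ne_of_mem_erase hk)]
            _ = ∏ k : Fin n, d (π (lo k)) (π (hi k)) :=
                Finset.mul_prod_erase Finset.univ
                  (fun k => d (π (lo k)) (π (hi k))) (Finset.mem_univ j)
        rw [hsgn, hFa, neg_smul, smul_neg, neg_neg] at hIH
        rw [hIH, hFd]
  -- conjugation map
  set cm : Equiv.Perm (Fin (2 * n)) → Equiv.Perm (Fin (2 * n)) := fun π => π * sp * π⁻¹ with hcm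
  have hcm_apply : ∀ (π : Equiv.Perm (Fin (2 * n))) (x), cm π (π x) = π (sp x) := by
    intro π x
    simp only [hcm, Equiv.Perm.mul_apply, Equiv.Perm.inv_apply_self]
  have hfiber : ∀ (fm π : Equiv.Perm (Fin (2 * n))), cm π = fm → (∀ x, fm (π x) = π (sp x)) := by
    intro fm π h x
    rw [← h]
    exact hcm_apply π x
  have step1 : (∑ π : Equiv.Perm (Fin (2 * n)), (Equiv.Perm.sign π : ℤ) •
        ∏ k : Fin n, a (π (lo k)) (π (hi k)))
      = ∑ fm : Equiv.Perm (Fin (2 * n)), ∑ π ∈ Finset.univ.filter (fun π => cm π = fm),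
          ((Equiv.Perm.sign π : ℤ) • ∏ k : Fin n, a (π (lo k)) (π (hi k))) :=
    (Finset.sum_fiberwise_of_maps_to (fun π _ => Finset.mem_univ (cm π)) _).symm
  have step2 : ∀ fm : Equiv.Perm (Fin (2 * n)),
      ¬ (∀ i, fm i ≠ i ∧ fm (fm i) = i ∧ G.Adj i (fm i)) →
      (∑ π ∈ Finset.univ.filter (fun π => cm π = fm),
        ((Equiv.Perm.sign π : ℤ) • ∏ k : Fin n, a (π (lo k)) (π (hi k)))) = 0 := by
    intro fm hfm
    apply Finset.sum_eq_zero
    intro π hπ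
    have hc := (Finset.mem_filter.mp hπ).2
    have hfa := hfiber fm π hc
    have hss : ∀ x : Fin (2 * n), sp (sp x) = x := fun x => sfun_invol x
    have hnex : ¬ (∀ k : Fin n, G.Adj (π (lo k)) (π (hi k))) := by
      intro hadj
      apply hfm
      intro i
      obtain ⟨x, hx⟩ : ∃ x, π x = i := ⟨π⁻¹ i, Equiv.Perm.apply_inv_self π i⟩
      refine ⟨?_, ?_, ?_⟩
      · rw [← hx, hfa x]
        intro hbad
        exact sp_ne x (π.injective hbad)
      · rw [← hx, hfa x, hfa (sp x), hss]
      · rcases lo_or_hi x with ⟨k, rfl⟩ | ⟨k, rfl⟩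
        · rw [← hx, hfa, sp_lo]; exact hadj k
        · rw [← hx, hfa, sp_hi]; exact (hadj k).symm
    push_neg at hnex
    obtain ⟨k, hk⟩ := hnex
    have hz : a (π (lo k)) (π (hi k)) = 0 := by rw [ha, if_neg hk]
    rw [Finset.prod_eq_zero (Finset.mem_univ k) hz, smul_zero]
  have step3 : ∀ fm : Equiv.Perm (Fin (2 * n)),
      (∀ i, fm i ≠ i ∧ fm (fm i) = i ∧ G.Adj i (fm i)) →
      (∑ π ∈ Finset.univ.filter (fun π => cm π = fm),
        ((Equiv.Perm.sign π : ℤ) • ∏ k : Fin n, a (π (lo k)) (π (hi k))))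
      = (2 ^ n * Nat.factorial n) •
          ∏ i ∈ Finset.univ.filter (fun i => i < fm i), d i (fm i) := by
    intro fm hfm
    have hterm : ∀ π ∈ Finset.univ.filter (fun π => cm π = fm),
        ((Equiv.Perm.sign π : ℤ) • ∏ k : Fin n, a (π (lo k)) (π (hi k)))
        = ∏ i ∈ Finset.univ.filter (fun i => i < fm i), d i (fm i) := by
      intro π hπ
      have hc := (Finset.mem_filter.mp hπ).2
      have hfa := hfiber fm π hc
      have hf1 : ∀ k, fm (π (lo k)) = π (hi k) := fun k => by rw [hfa, sp_lo]
      have hf2 : ∀ k, fm (π (hi k)) = π (lo k) := fun k => by rw [hfa, sp_hi]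
      have hadj : ∀ k, G.Adj (π (lo k)) (π (hi k)) := by
        intro k
        have h3 := (hfm (π (lo k))).2.2
        rw [hf1 k] at h3
        exact h3
      have hkey := key Finset.univ π hadj (fun k hk => absurd (Finset.mem_univ k) hk)
      rw [hkey]
      have hne : ∀ k : Fin n, π (lo k) ≠ π (hi k) := fun k h => lo_ne_hi k k (π.injective h)
      apply Finset.prod_bij (fun k _ => if π (lo k) < π (hi k) then π (lo k) else π (hi k))
      · intro k _
        by_cases hlt : π (lo k) < π (hi k)
        · rw [if_pos hlt]
          exact Finset.mem_filter.mpr ⟨Finset.mem_univ _, by rw [hf1 k]; exact hlt⟩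
        · rw [if_neg hlt]
          have hlt2 : π (hi k) < π (lo k) := (hne k).lt_or_gt.resolve_left hlt
          exact Finset.mem_filter.mpr ⟨Finset.mem_univ _, by rw [hf2 k]; exact hlt2⟩
      · intro k1 _ k2 _ h12
        by_cases h1 : π (lo k1) < π (hi k1) <;> by_cases h2 : π (lo k2) < π (hi k2)
        · rw [if_pos h1, if_pos h2] at h12
          exact lo_inj (π.injective h12)
        · rw [if_pos h1, if_neg h2] at h12
          exact absurd (π.injective h12) (lo_ne_hi k1 k2)
        · rw [if_neg h1, if_pos h2] at h12
          exact absurd (π.injective h12).symm (lo_ne_hi k2 k1)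
        · rw [if_neg h1, if_neg h2] at h12
          exact hi_inj (π.injective h12)
      · intro i hi2
        have hilt := (Finset.mem_filter.mp hi2).2
        rcases lo_or_hi (π⁻¹ i) with ⟨k, hk⟩ | ⟨k, hk⟩
        · refine ⟨k, Finset.mem_univ k, ?_⟩
          have hx : π (lo k) = i := by rw [← hk, Equiv.Perm.apply_inv_self]
          have hfmi : π (hi k) = fm i := by rw [← hf1 k, hx]
          rw [if_pos (by rw [hx, hfmi]; exact hilt)]
          exact hx
        · refine ⟨k, Finset.mem_univ k, ?_⟩
          have hx : π (hi k) = i := by rw [← hk, Equiv.Perm.apply_inv_self]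
          have hfmi : π (lo k) = fm i := by rw [← hf2 k, hx]
          rw [if_neg (by rw [hx, hfmi]; exact not_lt.mpr (le_of_lt hilt))]
          exact hx
      · intro k _
        by_cases hlt : π (lo k) < π (hi k)
        · rw [if_pos hlt, hf1 k]
        · rw [if_neg hlt, hf2 k]
          exact hd _ _
    rw [Finset.sum_congr rfl hterm, Finset.sum_const]
    congr 1
    obtain ⟨π₀, hπ₀⟩ := exists_pi0 fm (fun i => (hfm i).1) (fun i => (hfm i).2.1)
    rw [← card_centralizer (n := n)]
    apply Finset.card_bij' (i := fun π _ => π₀⁻¹ * π) (j := fun h _ => π₀ * h)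
    · intro π hπ
      have hc := (Finset.mem_filter.mp hπ).2
      refine Finset.mem_filter.mpr ⟨Finset.mem_univ _, ?_⟩
      intro x
      have hπx : ∀ y, π (sp y) = fm (π y) := fun y => (hfiber fm π hc y).symm
      have hπ₀x : ∀ y, π₀⁻¹ (fm y) = sp (π₀⁻¹ y) := by
        intro y
        have h5 := hπ₀ (π₀⁻¹ y)
        rw [Equiv.Perm.apply_inv_self] at h5
        rw [← h5, Equiv.Perm.inv_apply_self]
      show π₀⁻¹ (π (sp x)) = sp (π₀⁻¹ (π x))
      rw [hπx, hπ₀x]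
    · intro h hh
      have hc := (Finset.mem_filter.mp hh).2
      refine Finset.mem_filter.mpr ⟨Finset.mem_univ _, ?_⟩
      apply Equiv.ext
      intro x
      have h6 : cm (π₀ * h) x = π₀ (h (sp (h⁻¹ (π₀⁻¹ x)))) := by
        simp only [hcm, _root_.mul_inv_rev, Equiv.Perm.mul_apply]
      rw [h6, hc, Equiv.Perm.apply_inv_self, hπ₀, Equiv.Perm.apply_inv_self]
    · intro π _
      exact mul_inv_cancel_left π₀ π
    · intro h _
      exact inv_mul_cancel_left π₀ h
  have hp0 : ∀ fm ∈ (Finset.univ : Finset (Equiv.Perm (Fin (2 * n)))),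
      (∑ π ∈ Finset.univ.filter (fun π => cm π = fm),
        ((Equiv.Perm.sign π : ℤ) • ∏ k : Fin n, a (π (lo k)) (π (hi k)))) ≠ 0 →
      (∀ i, fm i ≠ i ∧ fm (fm i) = i ∧ G.Adj i (fm i)) := by
    intro fm _ hne
    by_contra hq
    exact hne (step2 fm hq)
  rw [pf_2n a, step1, ← Finset.sum_filter_of_ne hp0,
    Finset.sum_congr rfl (fun fm hfm => step3 fm (Finset.mem_filter.mp hfm).2),
    ← Finset.smul_sum]
  rw [nsmul_eq_mul, ← mul_assoc]
  have hone : (algebraMap ℚ R (1 / (2 ^ n * Nat.factorial n)))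
      * ((2 ^ n * Nat.factorial n : ℕ) : R) = 1 := by
    rw [← map_natCast (algebraMap ℚ R) (2 ^ n * Nat.factorial n), ← _root_.map_mul,
      ← _root_.map_one (algebraMap ℚ R)]
    congr 1
    push_cast
    rw [one_div, inv_mul_cancel₀ (by positivity)]
  rw [hone, one_mul]
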